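/- Let m ≥ 2 and r ≥ 1 be integers, set d = 2·m·r and ε = 1/(8r). If for every number of rows n there exists a deterministic (ε, M)-Itemset-Frequency-Indicator sketching scheme for pairs on d items and n rows, then 2^M ≥ (m!)^(r²) (equivalently, M ≥ r² · log₂(m!)). -/

import Mathlib

/-- The frequency of an itemset `T` in a database `D` with `n` rows over `d` items:
the fraction of rows in which every item of `T` occurs. -/
noncomputable def freq {n d : ℕ} (D : Fin n → Fin d → Bool) (T : Finset (Fin d)) : ℝ :=
  ((Finset.univ.filter (fun i : Fin n => ∀ j ∈ T, D i j = true)).card : ℝ) / n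

/-- A deterministic `(ε, M)`-Itemset-Frequency-Indicator sketching scheme for pairs on `d`
items and `n` rows: an encoder into `M`-bit sketches and a decoder answering every pairwise
query correctly. -/
def DetIFIScheme (d n M : ℕ) (ε : ℝ) : Prop :=
  ∃ (Enc : (Fin n → Fin d → Bool) → Fin (2 ^ M))
    (Dec : Fin (2 ^ M) → Fin d → Fin d → Bool),
    ∀ D : Fin n → Fin d → Bool, ∀ a b : Fin d, a ≠ b →
      (freq D {a, b} ≥ ε → Dec (Enc D) a b = true) ∧
      (freq D {a, b} ≤ ε / 2 → Dec (Enc D) a b = false)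

section AuxIFI

lemma card_one_pt {α β : Type*} [Fintype α] [DecidableEq α] [Fintype β] [DecidableEq β]
    (a : α) (b : β) :
    Fintype.card {f : α → β // f a = b} = Fintype.card β ^ (Fintype.card α - 1) := by
  have e : {f : α → β // f a = b} ≃ ({x : α // x ≠ a} → β) :=
    { toFun := fun f x => f.1 x.1
      invFun := fun g => ⟨fun x => if h : x = a then b else g ⟨x, h⟩, by simp⟩
      left_inv := by
        rintro ⟨f, hf⟩
        ext x
        by_cases h : x = a <;> simp [h, hf]
      right_inv := by
        rintro g
        ext x
        simp [x.2] }
  rw [Fintype.card_congr e, Fintype.card_fun]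
  congr 1
  have : Fintype.card {x : α // ¬ x = a} = Fintype.card α - Fintype.card {x : α // x = a} :=
    Fintype.card_subtype_compl _
  simpa [Fintype.card_subtype_eq] using this

lemma card_two_pt {α β : Type*} [Fintype α] [DecidableEq α] [Fintype β] [DecidableEq β]
    (a a' : α) (hne : a ≠ a') (b b' : β) :
    Fintype.card {f : α → β // f a = b ∧ f a' = b'} = Fintype.card β ^ (Fintype.card α - 2) := by
  have e : {f : α → β // f a = b ∧ f a' = b'} ≃ ({x : α // x ≠ a ∧ x ≠ a'} → β) :=
    { toFun := fun f x => f.1 x.1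
      invFun := fun g => ⟨fun x => if h : x = a then b else if h' : x = a' then b'
          else g ⟨x, ⟨h, h'⟩⟩, by simp [hne, Ne.symm hne]⟩
      left_inv := by
        rintro ⟨f, hf1, hf2⟩
        ext x
        by_cases h : x = a
        · simp [h, hf1]
        · by_cases h' : x = a' <;> simp [h, h', hf2, Ne.symm hne]
      right_inv := by
        rintro g
        ext x
        simp [x.2.1, x.2.2] }
  rw [Fintype.card_congr e, Fintype.card_fun]
  congr 1
  have h1 : Fintype.card {x : α // ¬ (x = a ∨ x = a')} =
      Fintype.card α - Fintype.card {x : α // x = a ∨ x = a'} :=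
    Fintype.card_subtype_compl _
  have h2 : Fintype.card {x : α // x = a ∨ x = a'} = 2 := by
    rw [Fintype.card_subtype]
    have : (Finset.univ.filter fun x : α => x = a ∨ x = a') = {a, a'} := by
      ext x; simp
    rw [this, Finset.card_insert_of_notMem (by simpa using hne), Finset.card_singleton]
  have e2 : {x : α // x ≠ a ∧ x ≠ a'} ≃ {x : α // ¬ (x = a ∨ x = a')} :=
    Equiv.subtypeEquivRight (by intro x; tauto)
  rw [Fintype.card_congr e2, h1, h2]

/-- Encoding of items: the `2·m·r` items are indexed by a side (left/right), a block
index in `Fin r` and a position in `Fin m`. -/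
noncomputable def eI (m r : ℕ) : (Bool × Fin r × Fin m) ≃ Fin (2 * m * r) :=
  Fintype.equivFinOfCardEq (by simp; ring)

/-- Encoding of rows: the `r · 4^m` rows are indexed by a block index and a
function `Fin m → Fin 4`. -/
noncomputable def eR (m r : ℕ) : (Fin r × (Fin m → Fin 4)) ≃ Fin (r * 4 ^ m) :=
  Fintype.equivFinOfCardEq (by simp)

/-- The hard database family, indexed by an `r × r` matrix of permutations of `Fin m`. -/
noncomputable def DB (m r : ℕ) (P : Fin r → Fin r → Equiv.Perm (Fin m))
    (row : Fin (r * 4 ^ m)) (item : Fin (2 * m * r)) : Bool :=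
  let p := (eR m r).symm row
  let x := (eI m r).symm item
  if x.1 then decide (p.2 ((P p.1 x.2.1)⁻¹ x.2.2) = 0)
  else decide (x.2.1 = p.1 ∧ p.2 x.2.2 = 0)

lemma freq_pair (m r : ℕ) (P : Fin r → Fin r → Equiv.Perm (Fin m))
    (i j : Fin r) (a b : Fin m) :
    freq (DB m r P) {eI m r (false, i, a), eI m r (true, j, b)} =
      (Fintype.card {f : Fin m → Fin 4 // f a = 0 ∧ f ((P i j)⁻¹ b) = 0} : ℝ) / (r * 4 ^ m) := by
  classical
  rw [freq]
  congr 1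
  · norm_cast
    have h1 : (Finset.univ.filter
        (fun row : Fin (r * 4 ^ m) => ∀ t ∈ ({eI m r (false, i, a), eI m r (true, j, b)} :
          Finset (Fin (2 * m * r))), DB m r P row t = true)).card =
        Fintype.card {row : Fin (r * 4 ^ m) //
          DB m r P row (eI m r (false, i, a)) = true ∧
          DB m r P row (eI m r (true, j, b)) = true} := by
      rw [Fintype.card_subtype]
      congr 1
      ext row
      simp
    rw [h1]
    have e2a : {row : Fin (r * 4 ^ m) //
          DB m r P row (eI m r (false, i, a)) = true ∧
          DB m r P row (eI m r (true, j, b)) = true} ≃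
        {p : Fin r × (Fin m → Fin 4) //
          DB m r P (eR m r p) (eI m r (false, i, a)) = true ∧
          DB m r P (eR m r p) (eI m r (true, j, b)) = true} :=
      (eR m r).symm.subtypeEquiv (fun row => by rw [Equiv.apply_symm_apply])
    have e2b : {p : Fin r × (Fin m → Fin 4) //
          DB m r P (eR m r p) (eI m r (false, i, a)) = true ∧
          DB m r P (eR m r p) (eI m r (true, j, b)) = true} ≃
        {p : Fin r × (Fin m → Fin 4) //
          p.1 = i ∧ p.2 a = 0 ∧ p.2 ((P p.1 j)⁻¹ b) = 0} := by
      refine Equiv.subtypeEquivRight (fun p => ?_)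
      simp only [DB, Equiv.symm_apply_apply, if_true, if_false, Bool.false_eq_true,
        decide_eq_true_eq]
      exact ⟨fun ⟨⟨h1, h2⟩, h3⟩ => ⟨h1.symm, h2, h3⟩, fun ⟨h1, h2, h3⟩ => ⟨⟨h1.symm, h2⟩, h3⟩⟩
    have e3 : {p : Fin r × (Fin m → Fin 4) //
          p.1 = i ∧ p.2 a = 0 ∧ p.2 ((P p.1 j)⁻¹ b) = 0} ≃
        {f : Fin m → Fin 4 // f a = 0 ∧ f ((P i j)⁻¹ b) = 0} :=
      { toFun := fun q => ⟨q.1.2, by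
          obtain ⟨⟨q1, q2⟩, h1, h2, h3⟩ := q
          dsimp only at h1 h2 h3 ⊢
          subst h1
          exact ⟨h2, h3⟩⟩
        invFun := fun f => ⟨(i, f.1), rfl, f.2.1, f.2.2⟩
        left_inv := by
          rintro ⟨⟨q1, q2⟩, h1, h2, h3⟩
          dsimp only at h1
          subst h1
          rfl
        right_inv := by rintro ⟨f, hf⟩; rfl }
    rw [Fintype.card_congr (e2a.trans (e2b.trans e3))]
  · push_cast
    ring

end AuxIFI

theorem det_itemset_sketch_counting_general (m r M : ℕ) (hm : 2 ≤ m) (hr : 1 ≤ r)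
    (h : ∀ n : ℕ, DetIFIScheme (2 * m * r) n M (1 / (8 * r))) :
    Nat.factorial m ^ (r ^ 2) ≤ 2 ^ M := by
  classical
  obtain ⟨Enc, Dec, hED⟩ := h (r * 4 ^ m)
  have hrR : (0 : ℝ) < (r : ℝ) := by exact_mod_cast hr
  have hm1 : 1 ≤ m := le_trans one_le_two hm
  have hpow1 : (4 : ℝ) ^ m = 4 ^ (m - 1) * 4 := by
    rw [← pow_succ, Nat.sub_add_cancel hm1]
  have hpow2 : (4 : ℝ) ^ m = 4 ^ (m - 2) * 16 := by
    have : (16 : ℝ) = 4 ^ 2 := by norm_num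
    rw [this, ← pow_add, Nat.sub_add_cancel hm]
  have hne_items : ∀ (i j : Fin r) (a b : Fin m),
      eI m r (false, i, a) ≠ eI m r (true, j, b) := by
    intro i j a b
    simp [(eI m r).apply_eq_iff_eq]
  -- matched pairs are frequent
  have hmatch : ∀ (P : Fin r → Fin r → Equiv.Perm (Fin m)) (i j : Fin r) (a : Fin m),
      freq (DB m r P) {eI m r (false, i, a), eI m r (true, j, P i j a)} ≥ 1 / (8 * r) := by
    intro P i j a
    rw [freq_pair]
    have hinv : (P i j)⁻¹ (P i j a) = a := Equiv.symm_apply_apply _ _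
    have hc : Fintype.card {f : Fin m → Fin 4 // f a = 0 ∧ f ((P i j)⁻¹ (P i j a)) = 0} =
        4 ^ (m - 1) := by
      have e : {f : Fin m → Fin 4 // f a = 0 ∧ f ((P i j)⁻¹ (P i j a)) = 0} ≃
          {f : Fin m → Fin 4 // f a = (0 : Fin 4)} :=
        Equiv.subtypeEquivRight (fun f => by rw [hinv]; tauto)
      rw [Fintype.card_congr e, card_one_pt]
      simp
    rw [hc]
    rw [ge_iff_le, div_le_div_iff₀ (by positivity) (by positivity)]
    push_cast
    rw [hpow1]
    nlinarith [pow_pos (by norm_num : (0:ℝ) < 4) (m - 1), hrR]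
  -- unmatched pairs are infrequent
  have hunmatch : ∀ (P : Fin r → Fin r → Equiv.Perm (Fin m)) (i j : Fin r) (a b : Fin m),
      b ≠ P i j a →
      freq (DB m r P) {eI m r (false, i, a), eI m r (true, j, b)} ≤ 1 / (8 * r) / 2 := by
    intro P i j a b hb
    rw [freq_pair]
    have hne : a ≠ (P i j)⁻¹ b := by
      intro hh
      apply hb
      rw [hh]
      exact (Equiv.apply_symm_apply _ _).symm
    have hc : Fintype.card {f : Fin m → Fin 4 // f a = 0 ∧ f ((P i j)⁻¹ b) = 0} =
        4 ^ (m - 2) := by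
      rw [card_two_pt a ((P i j)⁻¹ b) hne (0 : Fin 4) (0 : Fin 4)]
      simp
    rw [hc]
    have : ((4 ^ (m - 2) : ℕ) : ℝ) / ((r : ℝ) * 4 ^ m) = 1 / (8 * r) / 2 := by
      push_cast
      rw [hpow2]
      field_simp
      ring
    exact le_of_eq this
  -- the encoder is injective on the family
  have hinj : Function.Injective
      (fun P : Fin r → Fin r → Equiv.Perm (Fin m) => Enc (DB m r P)) := by
    intro P P' hPP'
    dsimp only at hPP'
    funext i j
    refine Equiv.ext (fun a => ?_)
    by_contra hab
    have h1 := (hED (DB m r P) _ _ (hne_items i j a (P i j a))).1 (hmatch P i j a)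
    have h2 := (hED (DB m r P') _ _ (hne_items i j a (P i j a))).2
      (hunmatch P' i j a (P i j a) hab)
    rw [hPP'] at h1
    rw [h1] at h2
    exact absurd h2 (by simp)
  have hcard := Fintype.card_le_of_injective _ hinj
  have hL : Fintype.card (Fin r → Fin r → Equiv.Perm (Fin m)) =
      Nat.factorial m ^ (r ^ 2) := by
    rw [Fintype.card_fun, Fintype.card_fun, Fintype.card_perm, Fintype.card_fin,
      Fintype.card_fin, ← pow_mul, sq]
  rw [hL, Fintype.card_fin] at hcard
  exact hcard
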